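/- Let X ∈ B(E,F) be nonzero with generalized inverse X⁺, and let M(X) = { T ∈ B(E,F) : T(N(X)) ⊆ R(X) }. Let P denote the projection of F onto R(X) along N(X⁺), Q the projection of F onto N(X⁺) along R(X), p the projection of E onto R(X⁺) along N(X), and q the projection of E onto N(X) along R(X⁺). Then M(X) = { P T + Q T p : T ∈ B(E,F) }. -/

import Mathlib

open ContinuousLinearMap

variable {E F : Type*} [NormedAddCommGroup E] [NormedSpace ℝ E] [CompleteSpace E]
  [NormedAddCommGroup F] [NormedSpace ℝ F] [CompleteSpace F]

theorem stmt14 (X : E →L[ℝ] F) (hX : X ≠ 0) (Xp : F →L[ℝ] E)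
    (h1 : X ∘L (Xp ∘L X) = X) (h2 : Xp ∘L (X ∘L Xp) = Xp)
    (P Q : F →L[ℝ] F) (p q : E →L[ℝ] E)
    (hP : P ∘L P = P) (hPr : LinearMap.range (P : F →ₗ[ℝ] F) = LinearMap.range (X : E →ₗ[ℝ] F))
    (hPk : LinearMap.ker (P : F →ₗ[ℝ] F) = LinearMap.ker (Xp : F →ₗ[ℝ] E))
    (hQ : Q ∘L Q = Q) (hQr : LinearMap.range (Q : F →ₗ[ℝ] F) = LinearMap.ker (Xp : F →ₗ[ℝ] E))
    (hQk : LinearMap.ker (Q : F →ₗ[ℝ] F) = LinearMap.range (X : E →ₗ[ℝ] F))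
    (hp : p ∘L p = p) (hpr : LinearMap.range (p : E →ₗ[ℝ] E) = LinearMap.range (Xp : F →ₗ[ℝ] E))
    (hpk : LinearMap.ker (p : E →ₗ[ℝ] E) = LinearMap.ker (X : E →ₗ[ℝ] F))
    (hq : q ∘L q = q) (hqr : LinearMap.range (q : E →ₗ[ℝ] E) = LinearMap.ker (X : E →ₗ[ℝ] F))
    (hqk : LinearMap.ker (q : E →ₗ[ℝ] E) = LinearMap.range (Xp : F →ₗ[ℝ] E)) :
    ∀ S : E →L[ℝ] F,
      Submodule.map (S : E →ₗ[ℝ] F) (LinearMap.ker (X : E →ₗ[ℝ] F)) ≤ LinearMap.range (X : E →ₗ[ℝ] F) ↔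
        ∃ T : E →L[ℝ] F, S = P ∘L T + Q ∘L (T ∘L p) := by
  intro S
  have hPP : ∀ y, P (P y) = P y := fun y => DFunLike.congr_fun hP y
  have hQQ : ∀ y, Q (Q y) = Q y := fun y => DFunLike.congr_fun hQ y
  have hqq : ∀ x, q (q x) = q x := fun x => DFunLike.congr_fun hq x
  have hpp : ∀ x, p (p x) = p x := fun x => DFunLike.congr_fun hp x
  constructor
  · intro hS
    refine ⟨S, ?_⟩
    ext x
    -- decompose x = p x + q x
    have hx1 : x - p x ∈ LinearMap.ker (p : E →ₗ[ℝ] E) := by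
      simp [LinearMap.mem_ker, map_sub, hpp x]
    have hx2 : x - p x ∈ LinearMap.range (q : E →ₗ[ℝ] E) := by
      rw [hqr, ← hpk]; exact hx1
    have hqfix : q (x - p x) = x - p x := by
      obtain ⟨z, hz⟩ := hx2
      rw [← hz, ContinuousLinearMap.coe_coe, hqq]
    have hpq : p x ∈ LinearMap.ker (q : E →ₗ[ℝ] E) := by rw [hqk, ← hpr]; exact ⟨x, rfl⟩
    have hqx : q x = x - p x := by
      have : q x = q (x - p x) + q (p x) := by rw [← map_add, sub_add_cancel]
      rw [this, hqfix, (show q (p x) = 0 from hpq), add_zero]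
    -- y = S x, decompose y = P y + Q y
    set y := S x with hy
    have hy1 : y - P y ∈ LinearMap.ker (P : F →ₗ[ℝ] F) := by
      simp [LinearMap.mem_ker, map_sub, hPP y]
    have hy2 : y - P y ∈ LinearMap.range (Q : F →ₗ[ℝ] F) := by rw [hQr, ← hPk]; exact hy1
    have hQfix : Q (y - P y) = y - P y := by
      obtain ⟨z, hz⟩ := hy2; rw [← hz, ContinuousLinearMap.coe_coe, hQQ]
    have hPQ : P y ∈ LinearMap.ker (Q : F →ₗ[ℝ] F) := by rw [hQk, ← hPr]; exact ⟨y, rfl⟩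
    have hQy : Q y = y - P y := by
      have : Q y = Q (y - P y) + Q (P y) := by rw [← map_add, sub_add_cancel]
      rw [this, hQfix, (show Q (P y) = 0 from hPQ), add_zero]
    -- Q (S (q x)) = 0
    have hSq : S (q x - q (q x)) + S (q x) ∈ LinearMap.range (X : E →ₗ[ℝ] F) := by
      have : q x ∈ LinearMap.ker (X : E →ₗ[ℝ] F) := by
        rw [← hqr]; exact ⟨x, rfl⟩
      have := hS ⟨q x, this, rfl⟩
      simpa [hqq] using this
    have hSq' : S (q x) ∈ LinearMap.range (X : E →ₗ[ℝ] F) := by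
      simpa [hqq] using hSq
    have hQSq : Q (S (q x)) = 0 := by
      rw [← hQk] at hSq'; exact hSq'
    -- assemble
    have hsplit : S x = S (p x) + S (q x) := by
      rw [hqx]; simp [map_sub]
    simp only [ContinuousLinearMap.add_apply, ContinuousLinearMap.coe_comp',
      Function.comp_apply]
    calc S x = P (S x) + Q (S x) := by rw [hQy, hy]; abel
      _ = P (S x) + Q (S (p x)) := by
          rw [hsplit, map_add, map_add, hQSq, add_zero]
  · rintro ⟨T, rfl⟩
    rintro _ ⟨x, hxk, rfl⟩
    have hpx : p x = 0 := by
      have h : x ∈ LinearMap.ker (p : E →ₗ[ℝ] E) := by rw [hpk]; exact hxk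
      exact h
    simp only [ContinuousLinearMap.coe_coe, ContinuousLinearMap.add_apply, ContinuousLinearMap.coe_comp',
      Function.comp_apply, hpx, map_zero, add_zero]
    rw [← hPr]
    exact ⟨T x, rfl⟩
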